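/- Let f : ℕ → ℝ be any total function. The class K₁ = { x infinite word | f_x = O(f) } of infinite words whose subword complexity is O(f) is machine invariant: if x ∈ K₁ and some initial Mealy machine transforms x to y, then y ∈ K₁. -/

import Mathlib

/-- A Mealy machine with state set `Q`, input alphabet `A`, output alphabet `B`. -/
structure Mealy (Q A B : Type*) where
  step : Q → A → Q
  out  : Q → A → B

namespace Mealy

variable {Q A B : Type*}

/-- Extension of the transition function to finite words. -/
def stepW (M : Mealy Q A B) : Q → List A → Q
  | q, [] => q
  | q, a :: u => M.stepW (M.step q a) u

/-- Extension of the output function to finite words. -/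
def outW (M : Mealy Q A B) : Q → List A → List B
  | _, [] => []
  | q, a :: u => M.out q a :: M.outW (M.step q a) u

end Mealy

/-- The length-`n` prefix `x[0,n-1]` of an infinite word. -/
def wordPrefix {A : Type*} (x : ℕ → A) (n : ℕ) : List A :=
  List.ofFn (fun i : Fin n => x i)

/-- The initial machine `(M, q₀)` transforms the infinite word `x` to `y`. -/
def Mealy.Transforms {Q A B : Type*} (M : Mealy Q A B) (q₀ : Q)
    (x : ℕ → A) (y : ℕ → B) : Prop :=
  ∀ n, wordPrefix y n = M.outW q₀ (wordPrefix x n)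

/-- `w` occurs in the infinite word `x` at position `m`. -/
def IsFactorAt {A : Type*} (x : ℕ → A) (w : List A) (m : ℕ) : Prop :=
  w = List.ofFn (fun i : Fin w.length => x (m + i))

/-- `w` is a factor of the infinite word `x`. -/
def IsFactor {A : Type*} (x : ℕ → A) (w : List A) : Prop :=
  ∃ m, IsFactorAt x w m

/-- An infinite word is recurrent if every factor occurs infinitely often. -/
def Recurrent {A : Type*} (x : ℕ → A) : Prop :=
  ∀ w, IsFactor x w → ∀ N, ∃ m ≥ N, IsFactorAt x w m

/-- `x` is ultimately recurrent: some suffix of `x` is recurrent. -/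
def UltimatelyRecurrent {A : Type*} (x : ℕ → A) : Prop :=
  ∃ k, Recurrent (fun n => x (n + k))

/-- The infinite word `u v^ω`. -/
def upWord {A : Type*} (u v : List A) (hv : v ≠ []) : ℕ → A :=
  fun n =>
    if h : n < u.length then u.get ⟨n, h⟩
    else v.get ⟨(n - u.length) % v.length, Nat.mod_lt _ (List.length_pos_iff.mpr hv)⟩

/-- `x` is ultimately periodic: `x = u v^ω`. -/
def UltimatelyPeriodic {A : Type*} (x : ℕ → A) : Prop :=
  ∃ (u v : List A) (hv : v ≠ []), x = upWord u v hv

/-- The subword complexity `f_x(n)`: number of distinct length-`n` factors of `x`. -/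
noncomputable def complexity {A : Type*} (x : ℕ → A) (n : ℕ) : ℕ :=
  Set.ncard {w : List A | w.length = n ∧ IsFactor x w}

/-- The growth function `g_x(n) = ∑_{i=0}^n f_x(i)`. -/
noncomputable def growth {A : Type*} (x : ℕ → A) (n : ℕ) : ℕ :=
  ∑ i ∈ Finset.range (n + 1), complexity x i

/-- The series (cascade) composition of two Mealy machines. -/
def Mealy.series {Q₁ Q₂ A B₁ B₂ : Type*} (M₁ : Mealy Q₁ A B₁)
    (M₂ : Mealy Q₂ B₁ B₂) : Mealy (Q₁ × Q₂) A B₂ where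
  step := fun p a => (M₁.step p.1 a, M₂.step p.2 (M₁.out p.1 a))
  out  := fun p a => M₂.out p.2 (M₁.out p.1 a)

/-- An initial Mealy machine over the fixed countable alphabet ℕ:
finite state set `Fin k`, finite input and output alphabets `A, B ⊆ ℕ`. -/
structure MachineN where
  k : ℕ
  A : Finset ℕ
  B : Finset ℕ
  M : Mealy (Fin k) A B
  q₀ : Fin k

/-- `V` transforms the ℕ-valued infinite word `x` (which must be apt for `V`,
i.e. take values in `V.A`) to `y`. -/
def MachineN.TransformsN (V : MachineN) (x y : ℕ → ℕ) : Prop :=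
  ∃ (x' : ℕ → V.A) (y' : ℕ → V.B),
    (∀ n, (x' n : ℕ) = x n) ∧ (∀ n, (y' n : ℕ) = y n) ∧
    V.M.Transforms V.q₀ x' y'

/-- `x ⇀ y` : some initial Mealy machine transforms `x` to `y`. -/
def TransN (x y : ℕ → ℕ) : Prop := ∃ V : MachineN, V.TransformsN x y

/-- The set 𝔉 of all infinite words over finite subalphabets of ℕ. -/
def FWords : Set (ℕ → ℕ) := {x | (Set.range x).Finite}

/-- A nonempty set of infinite words is machine invariant if every initial
Mealy machine transforms all apt words of it into words of it. -/
def MachineInvariant (K : Set (ℕ → ℕ)) : Prop :=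
  K.Nonempty ∧ K ⊆ FWords ∧ ∀ x ∈ K, ∀ y, TransN x y → y ∈ K

namespace Mealy
variable {Q A B : Type*}

theorem outW_append (M : Mealy Q A B) (q : Q) (u v : List A) :
    M.outW q (u ++ v) = M.outW q u ++ M.outW (M.stepW q u) v := by
  induction u generalizing q with
  | nil => simp [outW, stepW]
  | cons a u ih => simp [outW, stepW, ih]

theorem outW_length (M : Mealy Q A B) (q : Q) (u : List A) :
    (M.outW q u).length = u.length := by
  induction u generalizing q with
  | nil => rfl
  | cons a u ih => simp [outW, ih]

end Mealy

theorem wordPrefix_add {A : Type*} (x : ℕ → A) (m n : ℕ) :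
    wordPrefix x (m + n) = wordPrefix x m ++ List.ofFn (fun i : Fin n => x (m + i)) := by
  simp [wordPrefix, List.ofFn_add]

theorem wordPrefix_length {A : Type*} (x : ℕ → A) (n : ℕ) :
    (wordPrefix x n).length = n := by simp [wordPrefix]

theorem factor_out {Q A B : Type*} (M : Mealy Q A B) (q₀ : Q) (x : ℕ → A) (y : ℕ → B)
    (h : M.Transforms q₀ x y) (m n : ℕ) :
    List.ofFn (fun i : Fin n => y (m + i)) =
      M.outW (M.stepW q₀ (wordPrefix x m)) (List.ofFn fun i : Fin n => x (m + i)) := by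
  have h1 := h (m + n)
  rw [wordPrefix_add, wordPrefix_add, Mealy.outW_append, h m] at h1
  exact List.append_cancel_left h1

theorem isFactorAt_ofFn {A : Type*} (x : ℕ → A) (m n : ℕ) :
    IsFactorAt x (List.ofFn fun i : Fin n => x (m + i)) m := by
  unfold IsFactorAt
  apply List.ext_getElem <;> simp

/-- the class of infinite words with subword complexity `O(f)`
is machine invariant. -/
theorem complexity_bigO_invariant (f : ℕ → ℝ)
    {Q A B : Type*} [Fintype Q] [Fintype A] [Fintype B]
    (M : Mealy Q A B) (q₀ : Q) (x : ℕ → A) (y : ℕ → B)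
    (h : M.Transforms q₀ x y)
    (hx : ∃ c > (0 : ℝ), ∀ n, (complexity x n : ℝ) ≤ c * |f n|) :
    ∃ c > (0 : ℝ), ∀ n, (complexity y n : ℝ) ≤ c * |f n| := by
  classical
  obtain ⟨c, hc, hcb⟩ := hx
  have : Nonempty Q := ⟨q₀⟩
  have hQ : (0 : ℝ) < Fintype.card Q := by exact_mod_cast Fintype.card_pos
  refine ⟨Fintype.card Q * c, mul_pos hQ hc, fun n => ?_⟩
  have key : complexity y n ≤ Fintype.card Q * complexity x n := by
    set Sx : Set (List A) := {w : List A | w.length = n ∧ IsFactor x w} with hSxdef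
    have hSx : Sx.Finite :=
      (List.finite_length_eq A n).subset (fun w hw => hw.1)
    set T : Finset (List B) :=
      Finset.univ.biUnion (fun q : Q => hSx.toFinset.image (M.outW q)) with hT
    have hsub : {w : List B | w.length = n ∧ IsFactor y w} ⊆ ↑T := by
      rintro w ⟨hlen, m, hfac⟩
      subst hlen
      have hw : w = M.outW (M.stepW q₀ (wordPrefix x m))
          (List.ofFn fun i : Fin w.length => x (m + i)) := by
        exact hfac.trans (factor_out M q₀ x y h m w.length)
      simp only [hT, Finset.coe_biUnion, Finset.mem_coe, Finset.mem_univ,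
        Set.mem_iUnion, Finset.mem_image, Set.Finite.mem_toFinset, exists_prop,
        true_and]
      refine ⟨M.stepW q₀ (wordPrefix x m),
        List.ofFn fun i : Fin w.length => x (m + i), ?_, hw.symm⟩
      constructor
      · simp
      · exact ⟨m, isFactorAt_ofFn x m w.length⟩
    calc complexity y n ≤ T.card := by
          rw [← Set.ncard_coe_finset]
          exact Set.ncard_le_ncard hsub T.finite_toSet
      _ ≤ ∑ q : Q, (hSx.toFinset.image (M.outW q)).card := Finset.card_biUnion_le
      _ ≤ ∑ _q : Q, Sx.ncard := by
          refine Finset.sum_le_sum fun q _ => ?_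
          rw [Set.ncard_eq_toFinset_card Sx hSx]
          exact Finset.card_image_le
      _ = Fintype.card Q * complexity x n := by
          simp [complexity, Finset.sum_const, hSxdef]
  calc (complexity y n : ℝ) ≤ (Fintype.card Q : ℝ) * complexity x n := by
        exact_mod_cast key
    _ ≤ (Fintype.card Q : ℝ) * (c * |f n|) := by
        exact mul_le_mul_of_nonneg_left (hcb n) (le_of_lt hQ)
    _ = Fintype.card Q * c * |f n| := by ring
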